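/- The semidihedral group of order 16, presented as the group with two generators s, t subject to the relations s^8 = 1, t^2 = 1, and t*s*t*s^{-3} = 1, has exactly 16 elements. Formally: if rels : Set (FreeGroup (Fin 2)) is the set {a^8, b^2, b*a*b*a⁻¹*a⁻¹*a⁻¹} where a = FreeGroup.of 0 and b = FreeGroup.of 1, then Nat.card (PresentedGroup rels) = 16. -/

import Mathlib

structure SD where
  a : ZMod 8
  b : ZMod 2
deriving DecidableEq

namespace SD

instance : Mul SD := ⟨fun x y => ⟨x.a + 3 ^ x.b.val * y.a, x.b + y.b⟩⟩
instance : One SD := ⟨⟨0, 0⟩⟩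
instance : Inv SD := ⟨fun x => ⟨-(3 ^ x.b.val * x.a), x.b⟩⟩

lemma mul_def (x y : SD) : x * y = ⟨x.a + 3 ^ x.b.val * y.a, x.b + y.b⟩ := rfl

lemma pow_val_add : ∀ b c : ZMod 2,
    (3 : ZMod 8) ^ ((b + c).val) = 3 ^ b.val * 3 ^ c.val := by decide

lemma self_add_self : ∀ b : ZMod 2, b + b = 0 := by decide

instance : Group SD where
  mul_assoc x y z := by
    simp only [mul_def, pow_val_add]
    congr 1
    · ring
    · exact add_assoc _ _ _
  one_mul y := by
    show (⟨0 + 3 ^ (0 : ZMod 2).val * y.a, 0 + y.b⟩ : SD) = y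
    simp
  mul_one x := by
    show (⟨x.a + 3 ^ x.b.val * 0, x.b + 0⟩ : SD) = x
    simp
  inv_mul_cancel x := by
    show (⟨-(3 ^ x.b.val * x.a) + 3 ^ x.b.val * x.a, x.b + x.b⟩ : SD) = ⟨0, 0⟩
    simp [self_add_self]

def equivProd : SD ≃ ZMod 8 × ZMod 2 where
  toFun x := (x.a, x.b)
  invFun p := ⟨p.1, p.2⟩
  left_inv _ := rfl
  right_inv _ := rfl

lemma card_eq : Nat.card SD = 16 := by
  rw [Nat.card_congr equivProd]
  simp [Nat.card_prod]

end SD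

namespace SD16

def rels : Set (FreeGroup (Fin 2)) :=
  {(FreeGroup.of 0) ^ 8, (FreeGroup.of 1) ^ 2,
    FreeGroup.of 1 * FreeGroup.of 0 * FreeGroup.of 1 *
      (FreeGroup.of 0)⁻¹ * (FreeGroup.of 0)⁻¹ * (FreeGroup.of 0)⁻¹}

abbrev G := PresentedGroup rels

def σ : G := PresentedGroup.of 0
def τ : G := PresentedGroup.of 1

lemma mk_rel_eq_one {r : FreeGroup (Fin 2)} (hr : r ∈ rels) :
    (QuotientGroup.mk r : G) = 1 :=
  (QuotientGroup.eq_one_iff r).2 (Subgroup.subset_normalClosure hr)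

lemma sigma_pow_eight : σ ^ 8 = 1 := by
  have : (QuotientGroup.mk ((FreeGroup.of 0 : FreeGroup (Fin 2)) ^ 8) : G) = 1 :=
    mk_rel_eq_one (by simp [rels])
  exact this

lemma tau_sq : τ * τ = 1 := by
  have : (QuotientGroup.mk ((FreeGroup.of 1 : FreeGroup (Fin 2)) ^ 2) : G) = 1 :=
    mk_rel_eq_one (by simp [rels])
  rw [← sq]
  exact this

lemma braid : τ * σ = σ ^ 3 * τ := by
  have h : τ * σ * τ * σ⁻¹ * σ⁻¹ * σ⁻¹ = 1 := by
    have : (QuotientGroup.mk ((FreeGroup.of 1 * FreeGroup.of 0 * FreeGroup.of 1 *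
        (FreeGroup.of 0)⁻¹ * (FreeGroup.of 0)⁻¹ * (FreeGroup.of 0)⁻¹ : FreeGroup (Fin 2))) : G) = 1 :=
      mk_rel_eq_one (by simp [rels])
    exact this
  have h2 : τ * σ * τ = σ ^ 3 := by
    calc τ * σ * τ = (τ * σ * τ * σ⁻¹ * σ⁻¹ * σ⁻¹) * (σ * σ * σ) := by group
      _ = σ ^ 3 := by rw [h, one_mul, pow_succ, pow_succ, pow_one]
  calc τ * σ = (τ * σ * τ) * τ := by rw [mul_assoc, mul_assoc, tau_sq]; group
    _ = σ ^ 3 * τ := by rw [h2]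

lemma sigma_pow_mod (n : ℕ) : σ ^ n = σ ^ (n % 8) := by
  conv_lhs => rw [← Nat.div_add_mod n 8]
  rw [pow_add, pow_mul, sigma_pow_eight, one_pow, one_mul]

lemma tau_pow_mod (n : ℕ) : τ ^ n = τ ^ (n % 2) := by
  conv_lhs => rw [← Nat.div_add_mod n 2]
  rw [pow_add, pow_mul, sq, tau_sq, one_pow, one_mul]

lemma sigma_pow_cast (n : ℕ) : σ ^ n = σ ^ ((n : ZMod 8).val) := by
  rw [ZMod.val_natCast, sigma_pow_mod]

lemma tau_pow_cast (n : ℕ) : τ ^ n = τ ^ ((n : ZMod 2).val) := by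
  rw [ZMod.val_natCast, tau_pow_mod]

lemma tau_sigma_pow (n : ℕ) : τ * σ ^ n = σ ^ (3 * n) * τ := by
  induction n with
  | zero => simp
  | succ n ih =>
    rw [pow_succ, ← mul_assoc, ih, mul_assoc, braid, Nat.mul_succ, pow_add]
    group

lemma tau_pow_sigma_pow (j n : ℕ) : τ ^ j * σ ^ n = σ ^ (3 ^ j * n) * τ ^ j := by
  induction j generalizing n with
  | zero => simp
  | succ j ih =>
    rw [pow_succ, mul_assoc, tau_sigma_pow, ← mul_assoc, ih (3 * n), mul_assoc,
      ← pow_succ]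
    congr 2
    ring

def Ψ (m : SD) : G := σ ^ m.a.val * τ ^ m.b.val

lemma Ψ_mul (x y : SD) : Ψ x * Ψ y = Ψ (x * y) := by
  rcases x with ⟨a, b⟩
  rcases y with ⟨c, d⟩
  show σ ^ a.val * τ ^ b.val * (σ ^ c.val * τ ^ d.val) =
    σ ^ ((a + 3 ^ b.val * c).val) * τ ^ ((b + d).val)
  have e8 : ((a.val + 3 ^ b.val * c.val : ℕ) : ZMod 8) = a + 3 ^ b.val * c := by
    push_cast [ZMod.natCast_val, ZMod.cast_id]
    ring
  have e2 : ((b.val + d.val : ℕ) : ZMod 2) = b + d := by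
    push_cast [ZMod.natCast_val, ZMod.cast_id]
    ring
  calc σ ^ a.val * τ ^ b.val * (σ ^ c.val * τ ^ d.val)
      = σ ^ a.val * (τ ^ b.val * σ ^ c.val) * τ ^ d.val := by group
    _ = σ ^ a.val * (σ ^ (3 ^ b.val * c.val) * τ ^ b.val) * τ ^ d.val := by
        rw [tau_pow_sigma_pow]
    _ = σ ^ (a.val + 3 ^ b.val * c.val) * τ ^ (b.val + d.val) := by
        rw [pow_add, pow_add]; group
    _ = σ ^ ((a + 3 ^ b.val * c).val) * τ ^ ((b + d).val) := by
        rw [sigma_pow_cast, tau_pow_cast, e8, e2]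


def f : Fin 2 → SD := ![⟨1, 0⟩, ⟨0, 1⟩]

lemma hf : ∀ r ∈ rels, FreeGroup.lift f r = 1 := by
  intro r hr
  rcases hr with h | h | h <;> subst h <;>
    simp only [map_mul, map_inv, map_pow, FreeGroup.lift_apply_of, f] <;> decide

def φ : G →* SD := PresentedGroup.toGroup hf

lemma φ_σ : φ σ = ⟨1, 0⟩ := PresentedGroup.toGroup.of hf
lemma φ_τ : φ τ = ⟨0, 1⟩ := PresentedGroup.toGroup.of hf

lemma f0_pow (n : ℕ) : (⟨1, 0⟩ : SD) ^ n = ⟨(n : ZMod 8), 0⟩ := by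
  induction n with
  | zero => rfl
  | succ n ih =>
    rw [pow_succ, ih, SD.mul_def]
    congr 1 <;> push_cast <;> simp

lemma f1_pow (n : ℕ) : (⟨0, 1⟩ : SD) ^ n = ⟨0, (n : ZMod 2)⟩ := by
  induction n with
  | zero => rfl
  | succ n ih =>
    rw [pow_succ, ih, SD.mul_def]
    congr 1 <;> push_cast <;> simp

lemma φ_Ψ (m : SD) : φ (Ψ m) = m := by
  rw [Ψ, map_mul, map_pow, map_pow, φ_σ, φ_τ, f0_pow, f1_pow, SD.mul_def]
  simp only [ZMod.natCast_val, ZMod.cast_id]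
  rcases m with ⟨a, b⟩
  congr 1 <;> simp

lemma Ψ_surj : Function.Surjective Ψ := by
  intro g
  refine QuotientGroup.induction_on g ?_
  intro w
  induction w using FreeGroup.induction_on with
  | C1 => exact ⟨⟨0, 0⟩, rfl⟩
  | of x =>
    fin_cases x
    · exact ⟨⟨1, 0⟩, by show σ ^ (1 : ZMod 8).val * τ ^ (0 : ZMod 2).val = _; simp; rfl⟩
    · exact ⟨⟨0, 1⟩, by show σ ^ (0 : ZMod 8).val * τ ^ (1 : ZMod 2).val = _; simp; rfl⟩
  | inv_of x _ =>
    fin_cases x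
    · refine ⟨⟨7, 0⟩, ?_⟩
      show σ ^ (7 : ZMod 8).val * τ ^ (0 : ZMod 2).val = _
      have h7 : σ ^ (7 : ZMod 8).val * σ = 1 := by
        show σ ^ 7 * σ = 1
        rw [← pow_succ]; exact sigma_pow_eight
      simp only [ZMod.val, pow_zero, mul_one]
      exact inv_eq_of_mul_eq_one_left h7 ▸ rfl
    · refine ⟨⟨0, 1⟩, ?_⟩
      show σ ^ (0 : ZMod 8).val * τ ^ (1 : ZMod 2).val = _
      have ht : τ * τ = 1 := tau_sq
      simp only [pow_zero, one_mul, pow_one]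
      exact inv_eq_of_mul_eq_one_left ht ▸ rfl
  | mul x y ihx ihy =>
    obtain ⟨m1, h1⟩ := ihx
    obtain ⟨m2, h2⟩ := ihy
    exact ⟨m1 * m2, by rw [← Ψ_mul, h1, h2]; rfl⟩

lemma Ψ_bij : Function.Bijective Ψ :=
  ⟨Function.LeftInverse.injective φ_Ψ, Ψ_surj⟩

end SD16

/-- The semidihedral group of order 16, presented as
`⟨s, t | s^8 = 1, t^2 = 1, t*s*t*s⁻³ = 1⟩`, has exactly 16 elements. -/
theorem semidihedral16_card :
    Nat.card (PresentedGroup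
      ({(FreeGroup.of 0) ^ 8, (FreeGroup.of 1) ^ 2,
        FreeGroup.of 1 * FreeGroup.of 0 * FreeGroup.of 1 *
          (FreeGroup.of 0)⁻¹ * (FreeGroup.of 0)⁻¹ * (FreeGroup.of 0)⁻¹} :
        Set (FreeGroup (Fin 2)))) = 16 := by
  show Nat.card SD16.G = 16
  rw [← Nat.card_eq_of_bijective _ SD16.Ψ_bij]
  exact SD.card_eq
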